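/- Assume 2 divides n and set α₂ = deg₂(n), β₂ = deg₂(m), γ₂ = deg₂(t), δ₂ = deg₂(r−1), ε = deg₂(r+1). Suppose δ₂ = 1 < α₂ and γ₂ > 1. Let x₁, x₂, y₁, y₂ be nonnegative integers with gcd(gcd(r−1,n), t)·y₁ ≡ 0 (mod m) and x₁y₂ − x₂y₁ odd. Then the two congruences x₂·[m]_{r^{y₂}} + t·y₂ − x₁·[t]_{r^{y₁}} − (t·y₁/m)·t ≡ 0 (mod 2^{α₂}) and (r^{y₁}−1)·x₂ + ([r]_{r^{y₁}} − r^{y₂})·x₁ + ((r−1)·y₁/m)·t ≡ 0 (mod 2^{α₂}) hold simultaneously if and only if 2 divides y₁, deg₂(x₂) ≥ α₂ − β₂ − ε + 1, and 2^{ε}·(y₁ − y₂ + 1) ≡ 2·t·y₁/m (mod 2^{α₂}). -/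
import Mathlib

/-- The geometric sum `[k]_s = 1 + s + s^2 + ⋯ + s^(k-1)`, with `[0]_s = 0`. -/
def geomS (s : ℤ) (k : ℕ) : ℤ := ∑ i ∈ Finset.range k, s ^ i

lemma geomS_succ (s : ℤ) (k : ℕ) : geomS s (k+1) = geomS s k + s^k :=
  Finset.sum_range_succ _ _

lemma geomS_mul (s : ℤ) (k : ℕ) : (s - 1) * geomS s k = s^k - 1 := by
  rw [geomS, mul_comm]; exact geom_sum_mul s k

lemma geomS_choose (s : ℤ) (k : ℕ) :
    ∃ K : ℤ, geomS s k = (k : ℤ) + (s-1) * (k.choose 2 : ℕ) + (s-1)^2 * K := by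
  induction k with
  | zero => exact ⟨0, by simp [geomS]⟩
  | succ k ih =>
    obtain ⟨K, hK⟩ := ih
    refine ⟨K + k.choose 2 + (s-1)*K, ?_⟩
    have hs : s ^ k = 1 + (s-1) * geomS s k := by rw [geomS_mul]; ring
    have hc : ((k+1).choose 2 : ℤ) = (k.choose 2 : ℕ) + (k : ℤ) := by
      rw [Nat.choose_succ_succ k 1, Nat.choose_one_right]; push_cast; ring
    rw [geomS_succ, hs, hK, hc]
    push_cast
    ring

lemma geomS_modeq {M a b : ℤ} (h : a ≡ b [ZMOD M]) (k : ℕ) :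
    geomS a k ≡ geomS b k [ZMOD M] := by
  induction k with
  | zero => rfl
  | succ k ih => rw [geomS_succ, geomS_succ]; exact ih.add (h.pow k)

lemma geomS_neg_one {k : ℕ} (hk : Odd k) : geomS (-1) k = 1 := by
  induction k with
  | zero => simp at hk
  | succ k ih =>
    rw [geomS_succ]
    rcases Nat.even_or_odd k with he | ho
    · have : geomS (-1) k = 0 := by
        obtain ⟨j, rfl⟩ := he
        clear hk ih
        induction j with
        | zero => simp [geomS]
        | succ j ihj =>
          have : j + 1 + (j + 1) = (j + j) + 1 + 1 := by ring
          rw [this, geomS_succ, geomS_succ, ihj]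
          simp [pow_succ, pow_mul]
      rw [this, he.neg_one_pow]; ring
    · exact absurd (Nat.odd_add_one.mp hk) (by simpa using ho)

lemma odd_mul_dvd_iff {k : ℤ} (hk : Odd k) (j : ℕ) (a : ℤ) :
    (2:ℤ)^j ∣ k * a ↔ (2:ℤ)^j ∣ a := by
  constructor
  · intro h
    refine Int.prime_two.pow_dvd_of_dvd_mul_left j ?_ h
    intro hd
    obtain ⟨c, hc⟩ := hd
    obtain ⟨a, ha⟩ := hk
    omega
  · exact fun h => h.mul_left k

lemma le_of_pow_dvd_mul_odd {a b : ℕ} {k : ℤ} (hk : Odd k)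
    (h : (2:ℤ)^a ∣ 2^b * k) : a ≤ b := by
  by_contra hab
  have h1 : (2:ℤ)^(b+1) ∣ 2^b * k := dvd_trans (pow_dvd_pow 2 (by omega)) h
  rw [pow_succ] at h1
  have h2 : (2:ℤ) ∣ k := (mul_dvd_mul_iff_left (a := (2:ℤ)^b) (by positivity)).mp h1
  obtain ⟨c, hc⟩ := h2
  obtain ⟨a, ha⟩ := hk
  omega

lemma dvd_iff_of_sub {n X Y : ℤ} (h : n ∣ X - Y) : (n ∣ X ↔ n ∣ Y) := by
  constructor
  · intro hX; have := dvd_sub hX h; simpa using this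
  · intro hY; have : X = Y + (X - Y) := by ring
    rw [this]; exact dvd_add hY h

lemma cancel_helper {β : ℕ} {m₀ X : ℤ} (hm₀ : Odd m₀) {α : ℕ}
    (h : (2:ℤ)^(α+β) ∣ (2^β * m₀) * X) : (2:ℤ)^α ∣ X := by
  rw [show ((2:ℤ)^β * m₀) * X = 2^β * (m₀ * X) by ring, pow_add,
      show (2:ℤ)^α * 2^β = 2^β * 2^α by ring,
      mul_dvd_mul_iff_left (a := (2:ℤ)^β) (by positivity)] at h
  exact (odd_mul_dvd_iff hm₀ α X).mp h

lemma key_equiv {α j : ℕ} (hα : 1 ≤ α) {z₁ z₂ Q b k₁ k₂ : ℤ}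
    (hQ : Q = 2^(α-1) * b) (h₁ : Odd k₁) (h₂ : Odd k₂)
    (hz₁ : z₁ = 2^j * k₁) (hz₂ : z₂ = 2^j * k₂) :
    ((2:ℤ)^α ∣ z₁ + Q ↔ (2:ℤ)^α ∣ z₂ + Q) := by
  rcases le_or_gt (α-1) j with hj | hj
  · have hd : (2:ℤ)^α ∣ z₁ - z₂ := by
      obtain ⟨a, ha⟩ := h₁
      obtain ⟨c, hc⟩ := h₂
      have he : z₁ - z₂ = 2^j * 2 * (a - c) := by rw [hz₁, hz₂, ha, hc]; ring
      rw [he]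
      exact Dvd.dvd.mul_right
        (by rw [← pow_succ]; exact pow_dvd_pow 2 (by omega)) _
    have := dvd_iff_of_sub (n := (2:ℤ)^α) (X := z₁ + Q) (Y := z₂ + Q)
      (by have : z₁ + Q - (z₂ + Q) = z₁ - z₂ := by ring
          rw [this]; exact hd)
    exact this
  · have hfail : ∀ (z k : ℤ), Odd k → z = 2^j*k → ¬ (2:ℤ)^α ∣ z + Q := by
      intro z k hk hz hdvd
      have h1 : (2:ℤ)^(j+1) ∣ z + Q := dvd_trans (pow_dvd_pow 2 (by omega)) hdvd
      have h2 : (2:ℤ)^(j+1) ∣ Q := by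
        rw [hQ]; exact Dvd.dvd.mul_right (pow_dvd_pow 2 (by omega)) b
      have h3 : (2:ℤ)^(j+1) ∣ z := by
        have := dvd_sub h1 h2; simpa using this
      rw [hz, pow_succ] at h3
      have h4 : (2:ℤ) ∣ k := (mul_dvd_mul_iff_left (a := (2:ℤ)^j) (by positivity)).mp h3
      obtain ⟨c, hc⟩ := h4
      exact (Int.not_even_iff_odd.mpr hk) ⟨c, by omega⟩
    simp [hfail _ _ h₁ hz₁, hfail _ _ h₂ hz₂]

lemma Hpow {H : ℤ} {ε : ℕ} {v : ℤ} (hv : Odd v) (hH : H - 1 = 2^ε * v) (hε : 2 ≤ ε) :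
    ∀ (d x : ℕ), Odd x → ∃ k : ℤ, Odd k ∧ H ^ (2^d * x) - 1 = 2^(ε+d) * k := by
  have h2H : (2:ℤ) ∣ H - 1 := by
    rw [hH]; exact Dvd.dvd.mul_right (dvd_pow_self 2 (by omega)) v
  intro d
  induction d with
  | zero =>
    intro x hx
    refine ⟨v * geomS H x, ?_, ?_⟩
    · rw [Int.odd_mul]
      refine ⟨hv, ?_⟩
      obtain ⟨K, hK⟩ := geomS_choose H x
      have hxZ : Odd (x : ℤ) := by simpa using hx
      obtain ⟨c, hc⟩ := h2H
      obtain ⟨a, ha⟩ := hxZ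
      refine ⟨a + c * (x.choose 2 : ℕ) + 2*c^2*K, ?_⟩
      rw [hK, ha, hc]; ring
    · rw [show 2^0 * x = x by ring, ← geomS_mul, hH]
      rw [show ε + 0 = ε by ring]; ring
  | succ d ih =>
    intro x hx
    obtain ⟨k, hk, hA⟩ := ih x hx
    refine ⟨k * (1 + 2^(ε+d-1)*k), ?_, ?_⟩
    · rw [Int.odd_mul]
      refine ⟨hk, Odd.add_even odd_one ?_⟩
      have : (2:ℤ) ∣ 2^(ε+d-1)*k := Dvd.dvd.mul_right (dvd_pow_self 2 (by omega)) k
      obtain ⟨c, hc⟩ := this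
      exact ⟨c, by omega⟩
    · have hsq : H ^ (2^(d+1)*x) = (H ^ (2^d * x))^2 := by
        rw [← pow_mul]
        congr 1
        ring
      have hA1 : H ^ (2^d * x) + 1 = 2 * (1 + 2^(ε+d-1)*k) := by
        have h2 : (2:ℤ)^(ε+d) = 2 * 2^(ε+d-1) := by
          rw [← pow_succ']
          congr 1
          omega
        rw [show H ^ (2^d*x) + 1 = (H ^ (2^d*x) - 1) + 2 by ring, hA, h2]; ring
      rw [hsq, show (H ^ (2^d * x))^2 - 1 = (H ^ (2^d*x) - 1) * (H ^ (2^d*x) + 1) by ring,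
          hA, hA1, show ε + (d+1) = (ε+d)+1 by ring, pow_succ]
      ring

lemma odd_cofactor {x c : ℕ} {j : ℕ} (h1 : x = 2^j * c) (h2 : ¬ 2^(j+1) ∣ x) : Odd c := by
  rcases Nat.even_or_odd c with ⟨d, hd⟩ | ho
  · exact absurd ⟨d, by rw [h1, hd, pow_succ]; ring⟩ h2
  · exact ho

theorem stmt_16 (n m t r : ℕ) (hn : 0 < n) (hm : 0 < m) (ht : 0 < t) (hr : 0 < r)
    (htn : t ∣ n) (hrm : n ∣ r ^ m - 1) (htr : n ∣ t * (r - 1))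
    (h2n : 2 ∣ n)
    (α₂ β₂ γ₂ δ₂ ε : ℕ)
    (hα1 : 2 ^ α₂ ∣ n) (hα2 : ¬ 2 ^ (α₂ + 1) ∣ n)
    (hβ1 : 2 ^ β₂ ∣ m) (hβ2 : ¬ 2 ^ (β₂ + 1) ∣ m)
    (hγ1 : 2 ^ γ₂ ∣ t) (hγ2 : ¬ 2 ^ (γ₂ + 1) ∣ t)
    (hδ1 : 2 ^ δ₂ ∣ (r - 1)) (hδ2 : ¬ 2 ^ (δ₂ + 1) ∣ (r - 1))
    (hε1 : 2 ^ ε ∣ (r + 1)) (hε2 : ¬ 2 ^ (ε + 1) ∣ (r + 1))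
    (hδ : δ₂ = 1) (hα : 1 < α₂) (hγ : 1 < γ₂)
    (x₁ x₂ y₁ y₂ : ℕ)
    (hy : m ∣ Nat.gcd (Nat.gcd (r - 1) n) t * y₁)
    (hodd : ¬ (2 : ℤ) ∣ ((x₁ : ℤ) * (y₂ : ℤ) - (x₂ : ℤ) * (y₁ : ℤ))) :
    (((x₂ : ℤ) * geomS ((r : ℤ) ^ y₂) m + (t : ℤ) * (y₂ : ℤ)
          - (x₁ : ℤ) * geomS ((r : ℤ) ^ y₁) t
          - ((t * y₁ / m : ℕ) : ℤ) * (t : ℤ) ≡ 0 [ZMOD (2 : ℤ) ^ α₂]) ∧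
     (((r : ℤ) ^ y₁ - 1) * (x₂ : ℤ)
          + (geomS ((r : ℤ) ^ y₁) r - (r : ℤ) ^ y₂) * (x₁ : ℤ)
          + (((r - 1) * y₁ / m : ℕ) : ℤ) * (t : ℤ) ≡ 0 [ZMOD (2 : ℤ) ^ α₂])) ↔
    (2 ∣ y₁ ∧
     2 ^ (α₂ + 1) ∣ 2 ^ (β₂ + ε) * x₂ ∧
     ((2 : ℤ) ^ ε * ((y₁ : ℤ) - (y₂ : ℤ) + 1)
        ≡ 2 * ((t * y₁ / m : ℕ) : ℤ) [ZMOD (2 : ℤ) ^ α₂])) := by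
  subst hδ
  have hα2' : 2 ≤ α₂ := hα
  -- decompositions of t, m
  obtain ⟨t₀, ht₀⟩ := hγ1
  have ht₀odd : Odd t₀ := odd_cofactor ht₀ hγ2
  obtain ⟨m₀, hm₀⟩ := hβ1
  have hm₀odd : Odd m₀ := odd_cofactor hm₀ hβ2
  -- r = 4w+3
  obtain ⟨u, hu⟩ : ∃ u, r - 1 = 2 * u := by
    obtain ⟨u, hu⟩ := hδ1; exact ⟨u, by rw [hu, pow_one]⟩
  have huodd : Odd u := odd_cofactor (by rw [hu, pow_one]) hδ2
  obtain ⟨w, hwu⟩ := huodd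
  have hr43 : r = 4 * w + 3 := by omega
  -- v, ε ≥ 2
  obtain ⟨v, hv⟩ := hε1
  have hvodd : Odd v := odd_cofactor hv hε2
  have hε2' : 2 ≤ ε := by
    by_contra hcon
    exact hε2 (dvd_trans (pow_dvd_pow 2 (by omega : ε + 1 ≤ 2))
      ⟨w + 1, by rw [hr43]; norm_num; ring⟩)
  -- H setup
  set H : ℤ := 1 - 2^ε * (v:ℤ) with hHdef
  have hvZ : ((r:ℤ) + 1) = 2^ε * (v:ℤ) := by exact_mod_cast hv
  have hRH : (r:ℤ) = -H := by rw [hHdef]; linarith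
  have hHv : H - 1 = 2^ε * (-(v:ℤ)) := by rw [hHdef]; ring
  have hvoddZ : Odd (-(v:ℤ)) := (by simpa using hvodd : Odd ((v:ℤ))).neg
  have h2e : (2:ℤ)^ε = 2 * 2^(ε-1) := by
    rw [← pow_succ']; congr 1; omega
  have hHodd : Odd H := ⟨-(2^(ε-1) * (v:ℤ)), by rw [hHdef, h2e]; ring⟩
  have HpowH : ∀ (d x : ℕ), Odd x → ∃ k : ℤ, Odd k ∧ H ^ (2^d * x) - 1 = 2^(ε+d) * k :=
    Hpow hvoddZ hHv hε2'
  -- 2^α ∣ r^m − 1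
  have hRm : (2:ℤ)^α₂ ∣ (r:ℤ)^m - 1 := by
    have h2 : 1 ≤ r^m := Nat.one_le_pow _ _ (by omega)
    have h3 := Int.natCast_dvd_natCast.mpr (dvd_trans hα1 hrm)
    rw [Nat.cast_sub h2] at h3
    push_cast at h3
    exact h3
  -- m is even
  have h2m : 2 ∣ m := by
    by_contra h2m
    have hmodd : Odd m := Nat.odd_iff.mpr (by omega)
    obtain ⟨K, hK⟩ := geomS_choose (r:ℤ) m
    have hgodd : Odd (geomS (r:ℤ) m) := by
      rw [hK]
      have h1 : Even ((r:ℤ)-1) := ⟨2*(w:ℤ)+1, by push_cast [hr43]; ring⟩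
      have h2 : Even (((r:ℤ)-1)^2 * K) := by
        rw [sq]; exact ((h1.mul_right _).mul_right _)
      exact (((by simpa using hmodd : Odd ((m:ℤ))).add_even (h1.mul_right _)).add_even h2)
    have hfac : (r:ℤ)^m - 1 = 2^1 * ((2*(w:ℤ)+1) * geomS (r:ℤ) m) := by
      rw [← geomS_mul, show (r:ℤ) - 1 = 2*(2*(w:ℤ)+1) by push_cast [hr43]; ring]
      ring
    have := le_of_pow_dvd_mul_odd
      (Int.odd_mul.mpr ⟨⟨w, by ring⟩, hgodd⟩) (hfac ▸ hRm)
    omega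
  have hβ : 1 ≤ β₂ := by
    rcases Nat.eq_zero_or_pos β₂ with h0 | h1
    · exact absurd (by rwa [h0, zero_add, pow_one]) hβ2
    · exact h1
  -- α ≤ ε + β
  have hmeven : Even m := (even_iff_two_dvd).mpr h2m
  have hRmH : (r:ℤ)^m = H^m := by rw [hRH]; exact hmeven.neg_pow H
  have hεβ : α₂ ≤ ε + β₂ := by
    obtain ⟨k, hkodd, hk⟩ := HpowH β₂ m₀ hm₀odd
    rw [← hm₀] at hk
    exact le_of_pow_dvd_mul_odd hkodd (by rw [← hk, ← hRmH]; exact hRm)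
  -- α ≤ γ + 1 and γ ≤ α
  have hγα : α₂ ≤ γ₂ + 1 := by
    have hd : (2:ℤ)^α₂ ∣ (t:ℤ) * ((r:ℤ) - 1) := by
      have h3 := Int.natCast_dvd_natCast.mpr (dvd_trans hα1 htr)
      rw [Nat.cast_mul, Nat.cast_sub (by omega : 1 ≤ r)] at h3
      push_cast at h3
      exact h3
    have he : (t:ℤ) * ((r:ℤ) - 1) = 2^(γ₂+1) * ((t₀:ℤ) * (2*(w:ℤ)+1)) := by
      push_cast [ht₀, hr43]
      rw [pow_succ]; ring
    exact le_of_pow_dvd_mul_odd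
      (Int.odd_mul.mpr ⟨by simpa using ht₀odd, ⟨w, by ring⟩⟩) (he ▸ hd)
  have hγα2 : γ₂ ≤ α₂ := by
    by_contra hcon
    exact hα2 (dvd_trans (dvd_trans (pow_dvd_pow 2 (by omega)) ⟨t₀, ht₀⟩) htn)
  have ht4 : (2:ℕ)^2 ∣ t := dvd_trans (pow_dvd_pow 2 hγ) ⟨t₀, ht₀⟩
  -- gcd facts
  have hmty : m ∣ t * y₁ := hy.trans (mul_dvd_mul_right (Nat.gcd_dvd_right _ _) y₁)
  have hmry : m ∣ (r-1) * y₁ :=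
    hy.trans (mul_dvd_mul_right ((Nat.gcd_dvd_left _ _).trans (Nat.gcd_dvd_left _ _)) y₁)
  have hg₂Z : (m:ℤ) * ((t * y₁ / m : ℕ) : ℤ) = (t:ℤ) * (y₁:ℤ) := by
    exact_mod_cast congrArg (Nat.cast : ℕ → ℤ) (Nat.mul_div_cancel' hmty)
  have hg₁Z : (m:ℤ) * (((r-1) * y₁ / m : ℕ) : ℤ) = ((r:ℤ) - 1) * (y₁:ℤ) := by
    have := congrArg (Nat.cast : ℕ → ℤ) (Nat.mul_div_cancel' hmry)
    rw [Nat.cast_mul, Nat.cast_mul, Nat.cast_sub (by omega : 1 ≤ r)] at this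
    push_cast at this ⊢
    exact this
  have hmZ : (m:ℤ) = 2^β₂ * (m₀:ℤ) := by exact_mod_cast hm₀
  have hm₀oddZ : Odd ((m₀:ℤ)) := by simpa using hm₀odd
  rw [Int.modEq_zero_iff_dvd, Int.modEq_zero_iff_dvd, Int.modEq_iff_dvd]
  rcases Nat.even_or_odd y₁ with hy₁e | hy₁o
  · -- CASE A : y₁ even
    -- parities: x₁ odd, y₂ odd
    have hx₁y₂ : Odd ((x₁:ℤ) * (y₂:ℤ)) := by
      rcases Int.even_or_odd ((x₁:ℤ) * (y₂:ℤ)) with ⟨c, hc⟩ | ho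
      · obtain ⟨b, hb⟩ := hy₁e
        exact absurd (dvd_sub ⟨c, by omega⟩ ⟨(x₂:ℤ)*b, by push_cast [hb]; ring⟩) hodd
      · exact ho
    have hx₁oddZ : Odd ((x₁:ℤ)) := (Int.odd_mul.mp hx₁y₂).1
    have hy₂oddZ : Odd ((y₂:ℤ)) := (Int.odd_mul.mp hx₁y₂).2
    have hy₂odd : Odd y₂ := by simpa using hy₂oddZ
    have hy₂1 : 1 ≤ y₂ := by obtain ⟨b, hb⟩ := hy₂odd; omega
    set w₂ : ℕ := y₂ - 1 with hw₂def
    have hwy₂ : y₂ = w₂ + 1 := by omega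
    -- S₁ decomposition
    have hS₁cases : (y₁ = 0 ∧ (r:ℤ)^y₁ - 1 = 0) ∨
        ∃ (d₁ y₁' : ℕ) (k₃ : ℤ), Odd y₁' ∧ y₁ = 2^d₁ * y₁' ∧ β₂ ≤ d₁ + 1 ∧ Odd k₃ ∧
          (r:ℤ)^y₁ - 1 = 2^(ε+d₁) * k₃ ∧ α₂ - 1 ≤ ε + d₁ := by
      rcases Nat.eq_zero_or_pos y₁ with h0 | hpos
      · exact Or.inl ⟨h0, by rw [h0]; simp⟩
      · obtain ⟨d₁, y₁', hy₁'odd, hy₁eq⟩ := Nat.exists_eq_two_pow_mul_odd (by omega : y₁ ≠ 0)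
        have hd₁β : β₂ ≤ d₁ + 1 := by
          have h2g : 2 ∣ ((r-1).gcd n).gcd t :=
            Nat.dvd_gcd (Nat.dvd_gcd ⟨u, hu⟩ h2n)
              (dvd_trans (dvd_pow_self 2 (by omega : γ₂ ≠ 0)) ⟨t₀, ht₀⟩)
          obtain ⟨g₀, hg₀⟩ := h2g
          have hg₀odd : Odd g₀ := by
            rcases Nat.even_or_odd g₀ with ⟨c, hc⟩ | ho
            · have hg4 : (4:ℕ) ∣ ((r-1).gcd n).gcd t := ⟨c, by omega⟩
              have h4 : 4 ∣ r - 1 :=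
                hg4.trans ((Nat.gcd_dvd_left _ _).trans (Nat.gcd_dvd_left _ _))
              obtain ⟨q, hq⟩ := h4
              omega
            · exact ho
          have hdv : (2:ℤ)^β₂ ∣ 2^(d₁+1) * ((g₀:ℤ) * (y₁':ℤ)) := by
            have h1 : (2:ℤ)^β₂ ∣ ((((r-1).gcd n).gcd t * y₁ : ℕ) : ℤ) := by
              exact_mod_cast Int.natCast_dvd_natCast.mpr (dvd_trans ⟨m₀, hm₀⟩ hy)
            have h2 : ((((r-1).gcd n).gcd t * y₁ : ℕ) : ℤ) = 2^(d₁+1) * ((g₀:ℤ) * (y₁':ℤ)) := by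
              push_cast [hg₀, hy₁eq]
              rw [pow_succ]; ring
            rwa [h2] at h1
          exact le_of_pow_dvd_mul_odd
            (Int.odd_mul.mpr ⟨by simpa using hg₀odd, by simpa using hy₁'odd⟩) hdv
        obtain ⟨k₃, hk₃odd, hk₃⟩ := HpowH d₁ y₁' hy₁'odd
        refine Or.inr ⟨d₁, y₁', k₃, hy₁'odd, hy₁eq, hd₁β, hk₃odd, ?_, by omega⟩
        rw [show (r:ℤ)^y₁ = H^(2^d₁ * y₁') by
          rw [hRH, hy₁e.neg_pow, hy₁eq]]
        exact hk₃
    have h2S₁ : (2:ℤ)^(α₂-1) ∣ (r:ℤ)^y₁ - 1 := by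
      rcases hS₁cases with ⟨-, h0⟩ | ⟨d₁, y₁', k₃, -, -, -, -, hk₃, hle⟩
      · rw [h0]; exact dvd_zero _
      · rw [hk₃]; exact Dvd.dvd.mul_right (pow_dvd_pow 2 hle) _
    have hsq : (2:ℤ)^α₂ ∣ ((r:ℤ)^y₁ - 1)^2 := by
      refine dvd_trans ?_ (pow_dvd_pow_of_dvd h2S₁ 2)
      rw [← pow_mul]; exact pow_dvd_pow 2 (by omega)
    -- M decomposition
    have hMdec : ∃ k₅ : ℤ, Odd k₅ ∧ geomS ((r:ℤ)^y₂) m = 2^(ε+β₂-1) * k₅ := by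
      obtain ⟨k₈, hk₈odd, hk₈⟩ := HpowH 0 y₂ hy₂odd
      rw [pow_zero, one_mul, Nat.add_zero] at hk₈
      have hy₂H : (r:ℤ)^y₂ = -(H^y₂) := by rw [hRH, hy₂odd.neg_pow]
      have hk₇ : (r:ℤ)^y₂ - 1 = 2 * (-(1 + 2^(ε-1)*k₈)) := by
        have hH2 : H^y₂ = 1 + 2^ε * k₈ := by linarith
        rw [hy₂H, hH2, h2e]; ring
      have hk₇odd : Odd (-(1 + 2^(ε-1)*k₈)) := by
        refine Odd.neg (odd_one.add_even ?_)
        have h1 : (2:ℤ) ∣ 2^(ε-1)*k₈ := Dvd.dvd.mul_right (dvd_pow_self 2 (by omega)) k₈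
        obtain ⟨c, hc⟩ := h1
        exact ⟨c, by omega⟩
      obtain ⟨k₆, hk₆odd, hk₆⟩ := HpowH β₂ (y₂*m₀) (hy₂odd.mul hm₀odd)
      have hexp : (r:ℤ)^(y₂*m) = H^(2^β₂ * (y₂*m₀)) := by
        rw [hRH]
        have hev : Even (y₂*m) := hmeven.mul_left y₂
        rw [hev.neg_pow]
        congr 1
        rw [hm₀]; ring
      have hgm : ((r:ℤ)^y₂ - 1) * geomS ((r:ℤ)^y₂) m = (r:ℤ)^(y₂*m) - 1 := by
        rw [geomS_mul, ← pow_mul]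
      rw [hk₇, hexp, hk₆] at hgm
      have h2eb : (2:ℤ)^(ε+β₂) = 2 * 2^(ε+β₂-1) := by
        rw [← pow_succ']; congr 1; omega
      rw [h2eb] at hgm
      have hgm2 : (-(1 + 2^(ε-1)*k₈)) * geomS ((r:ℤ)^y₂) m = 2^(ε+β₂-1) * k₆ := by
        have := hgm
        rw [mul_assoc, mul_assoc] at this
        exact mul_left_cancel₀ two_ne_zero this
      have hdvM : (2:ℤ)^(ε+β₂-1) ∣ geomS ((r:ℤ)^y₂) m :=
        (odd_mul_dvd_iff hk₇odd _ _).mp ⟨k₆, hgm2.symm ▸ by rw [← hgm2]⟩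
      obtain ⟨μ, hμ⟩ := hdvM
      refine ⟨μ, ?_, hμ⟩
      have : (-(1 + 2^(ε-1)*k₈)) * μ = k₆ := by
        have h1 : (2:ℤ)^(ε+β₂-1) * ((-(1 + 2^(ε-1)*k₈)) * μ) = 2^(ε+β₂-1) * k₆ := by
          rw [← hgm2, hμ]; ring
        exact mul_left_cancel₀ (by positivity) h1
      exact (Int.odd_mul.mp (this ▸ hk₆odd)).2
    -- 2^α ∣ G2 * t
    have hg₂T : (2:ℤ)^α₂ ∣ ((t * y₁ / m : ℕ) : ℤ) * (t:ℤ) := by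
      apply cancel_helper hm₀oddZ (β := β₂)
      rw [← hmZ]
      have he : (m:ℤ) * (((t * y₁ / m : ℕ) : ℤ) * (t:ℤ)) = (t:ℤ)*(t:ℤ)*(y₁:ℤ) := by
        rw [← mul_assoc, hg₂Z]; ring
      rw [he]
      rcases hS₁cases with ⟨h0, -⟩ | ⟨d₁, y₁', k₃, -, hy₁eq, hd₁β, -, -, -⟩
      · rw [h0]; simp
      · have htt : (t:ℤ)*(t:ℤ)*(y₁:ℤ) = 2^(γ₂+γ₂+d₁) * ((t₀:ℤ)*t₀*y₁') := by
          push_cast [ht₀, hy₁eq]; ring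
        rw [htt]
        exact Dvd.dvd.mul_right (pow_dvd_pow 2 (by omega)) _
    -- C1 analysis
    have ht2 : 2 ∣ t.choose 2 := by
      obtain ⟨s, hs⟩ := ht4
      rw [Nat.choose_two_right]
      refine ⟨s*(t-1), ?_⟩
      have he : t*(t-1) = 2*(2*(s*(t-1))) := by rw [hs]; ring
      rw [he, Nat.mul_div_cancel_left _ (by norm_num)]
    have p1 : (2:ℤ)^α₂ ∣ ((r:ℤ)^y₁ - 1) * ((t.choose 2 : ℕ) : ℤ) := by
      rw [show (2:ℤ)^α₂ = 2^(α₂-1) * 2 by rw [← pow_succ]; congr 1; omega]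
      exact mul_dvd_mul h2S₁ (by exact_mod_cast ht2)
    have p3 : (2:ℤ)^α₂ ∣ (t:ℤ) * ((y₂:ℤ) - (x₁:ℤ)) := by
      obtain ⟨a, ha⟩ := hy₂oddZ
      obtain ⟨b, hb⟩ := hx₁oddZ
      have he : (t:ℤ) * ((y₂:ℤ) - (x₁:ℤ)) = 2^(γ₂+1) * ((t₀:ℤ) * (a - b)) := by
        push_cast [ht₀]
        rw [ha, hb, pow_succ]; ring
      rw [he]
      exact Dvd.dvd.mul_right (pow_dvd_pow 2 hγα) _
    obtain ⟨K, hGt⟩ := geomS_choose ((r:ℤ)^y₁) t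
    have hC1sub : (2:ℤ)^α₂ ∣ ((x₂:ℤ) * geomS ((r:ℤ)^y₂) m + (t:ℤ)*(y₂:ℤ)
        - (x₁:ℤ) * geomS ((r:ℤ)^y₁) t - ((t * y₁ / m : ℕ) : ℤ)*(t:ℤ))
        - (x₂:ℤ) * geomS ((r:ℤ)^y₂) m := by
      have he : ((x₂:ℤ) * geomS ((r:ℤ)^y₂) m + (t:ℤ)*(y₂:ℤ)
          - (x₁:ℤ) * geomS ((r:ℤ)^y₁) t - ((t * y₁ / m : ℕ) : ℤ)*(t:ℤ))
          - (x₂:ℤ) * geomS ((r:ℤ)^y₂) m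
          = (t:ℤ)*((y₂:ℤ) - (x₁:ℤ)) - (((r:ℤ)^y₁ - 1) * ((t.choose 2 : ℕ) : ℤ)) * x₁
            - (((r:ℤ)^y₁ - 1)^2 * K) * x₁ - ((t * y₁ / m : ℕ) : ℤ)*(t:ℤ) := by
        rw [hGt]; ring
      rw [he]
      exact dvd_sub (dvd_sub (dvd_sub p3 (p1.mul_right _)) ((hsq.mul_right K).mul_right _)) hg₂T
    obtain ⟨k₅, hk₅odd, hk₅⟩ := hMdec
    have hC1iff : ((2:ℤ)^α₂ ∣ ((x₂:ℤ) * geomS ((r:ℤ)^y₂) m + (t:ℤ)*(y₂:ℤ)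
        - (x₁:ℤ) * geomS ((r:ℤ)^y₁) t - ((t * y₁ / m : ℕ) : ℤ)*(t:ℤ)))
        ↔ (2:ℤ)^α₂ ∣ 2^(ε+β₂-1) * (x₂:ℤ) := by
      rw [dvd_iff_of_sub hC1sub]
      rw [show (x₂:ℤ) * geomS ((r:ℤ)^y₂) m = k₅ * (2^(ε+β₂-1) * (x₂:ℤ)) by rw [hk₅]; ring]
      exact odd_mul_dvd_iff hk₅odd _ _
    have hcond2iff : ((2:ℕ)^(α₂+1) ∣ 2^(β₂+ε) * x₂) ↔ ((2:ℤ)^α₂ ∣ 2^(ε+β₂-1) * (x₂:ℤ)) := by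
      rw [← Int.natCast_dvd_natCast]
      push_cast
      have he1 : (2:ℤ) * 2^(ε+β₂-1) = 2^(β₂+ε) := by
        rw [← pow_succ']; congr 1; omega
      have he2 : (2:ℤ) * 2^α₂ = 2^(α₂+1) := (pow_succ' 2 α₂).symm
      constructor
      · intro h
        have h' : (2:ℤ)*2^α₂ ∣ 2*(2^(ε+β₂-1) * (x₂:ℤ)) := by
          rw [he2, ← mul_assoc, he1]
          exact h
        exact (mul_dvd_mul_iff_left (two_ne_zero)).mp h'
      · intro h
        have h' := mul_dvd_mul_left (2:ℤ) h
        rwa [he2, ← mul_assoc, he1] at h'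
    -- C2 analysis
    have hch : r.choose 2 = (4*w+3)*(2*w+1) := by
      rw [Nat.choose_two_right]
      have h1 : r * (r-1) = 2*((4*w+3)*(2*w+1)) := by
        have h2 : r - 1 = 4*w+2 := by omega
        rw [h2, hr43]; ring
      rw [h1, Nat.mul_div_cancel_left _ (by norm_num)]
    have hNodd : Odd (r.choose 2) :=
      hch ▸ (⟨4*w^2+5*w+1, by ring⟩ : Odd ((4*w+3)*(2*w+1)))
    have hrid : (r:ℤ) - (r:ℤ)^y₂ = H * (H^w₂ - 1) := by
      rw [show (r:ℤ)^y₂ = -(H^y₂) from by rw [hRH, hy₂odd.neg_pow], hRH, hwy₂, pow_succ]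
      ring
    obtain ⟨K₂, hGr⟩ := geomS_choose ((r:ℤ)^y₁) r
    have hC2z : (2:ℤ)^α₂ ∣ (((r:ℤ)^y₁ - 1) * (x₂:ℤ)
        + (geomS ((r:ℤ)^y₁) r - (r:ℤ)^y₂) * (x₁:ℤ) + (((r-1) * y₁ / m : ℕ) : ℤ) * (t:ℤ))
        - (((x₁:ℤ)*H*(H^w₂-1)) + (((r:ℤ)^y₁-1)*((x₂:ℤ) + ((r.choose 2 : ℕ):ℤ)*(x₁:ℤ))
            + (((r-1) * y₁ / m : ℕ) : ℤ) * (t:ℤ))) := by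
      have h2 : (r:ℤ)^y₂ = (r:ℤ) - H*(H^w₂-1) := by linarith
      have he : (((r:ℤ)^y₁ - 1) * (x₂:ℤ)
          + (geomS ((r:ℤ)^y₁) r - (r:ℤ)^y₂) * (x₁:ℤ) + (((r-1) * y₁ / m : ℕ) : ℤ) * (t:ℤ))
          - (((x₁:ℤ)*H*(H^w₂-1)) + (((r:ℤ)^y₁-1)*((x₂:ℤ) + ((r.choose 2 : ℕ):ℤ)*(x₁:ℤ))
              + (((r-1) * y₁ / m : ℕ) : ℤ) * (t:ℤ)))
          = ((r:ℤ)^y₁ - 1)^2 * (K₂ * (x₁:ℤ)) := by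
        rw [hGr, h2]; ring
      rw [he]
      exact hsq.mul_right _
    have hpart2 : (2:ℤ)^α₂ ∣ (((r-1) * y₁ / m : ℕ) : ℤ) * (t:ℤ) - 2 * ((t * y₁ / m : ℕ) : ℤ) := by
      apply cancel_helper hm₀oddZ (β := β₂)
      rw [← hmZ]
      have he : (m:ℤ) * ((((r-1) * y₁ / m : ℕ) : ℤ) * (t:ℤ) - 2 * ((t * y₁ / m : ℕ) : ℤ))
          = (t:ℤ) * (y₁:ℤ) * ((r:ℤ) - 3) := by
        linear_combination (t:ℤ) * hg₁Z - 2 * hg₂Z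
      rw [he]
      rcases hS₁cases with ⟨h0, -⟩ | ⟨d₁, y₁', k₃, -, hy₁eq, hd₁β, -, -, -⟩
      · rw [h0]; simp
      · rw [show (t:ℤ) * (y₁:ℤ) * ((r:ℤ) - 3) = 2^(γ₂+d₁+2) * ((t₀:ℤ)*(y₁':ℤ)*(w:ℤ)) by
          push_cast [ht₀, hy₁eq, hr43]; ring]
        exact Dvd.dvd.mul_right (pow_dvd_pow 2 (by omega)) _
    have hQdvd : (2:ℤ)^(α₂-1) ∣ 2 * ((t * y₁ / m : ℕ) : ℤ) - 2^ε*(y₁:ℤ) := by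
      refine dvd_sub ?_ ?_
      · apply cancel_helper hm₀oddZ (β := β₂)
        rw [← hmZ]
        rcases hS₁cases with ⟨h0, -⟩ | ⟨d₁, y₁', k₃, -, hy₁eq, hd₁β, -, -, -⟩
        · rw [h0]; simp
        · have he : (m:ℤ) * (2 * ((t * y₁ / m : ℕ) : ℤ)) = 2^(γ₂+d₁+1) * ((t₀:ℤ)*(y₁':ℤ)) := by
            rw [show (m:ℤ) * (2 * ((t * y₁ / m : ℕ) : ℤ)) = 2*((m:ℤ) * ((t * y₁ / m : ℕ) : ℤ)) by ring,
              hg₂Z]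
            push_cast [ht₀, hy₁eq]
            rw [pow_succ]; ring
          rw [he]
          exact Dvd.dvd.mul_right (pow_dvd_pow 2 (by omega)) _
      · rcases hS₁cases with ⟨h0, -⟩ | ⟨d₁, y₁', k₃, -, hy₁eq, hd₁β, -, -, hle⟩
        · rw [h0]; simp
        · rw [show (2:ℤ)^ε * (y₁:ℤ) = 2^(ε+d₁) * (y₁':ℤ) by push_cast [hy₁eq]; ring]
          exact Dvd.dvd.mul_right (pow_dvd_pow 2 hle) _
    obtain ⟨bQ, hbQ⟩ := hQdvd
    have hKEY : ((2:ℤ)^α₂ ∣ (x₁:ℤ)*H*(H^w₂-1)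
          + (2 * ((t * y₁ / m : ℕ) : ℤ) - 2^ε*(y₁:ℤ)))
        ↔ ((2:ℤ)^α₂ ∣ 2^ε*(w₂:ℤ) + (2 * ((t * y₁ / m : ℕ) : ℤ) - 2^ε*(y₁:ℤ))) := by
      rcases Nat.eq_zero_or_pos w₂ with h0 | hpos
      · rw [h0]; simp
      · obtain ⟨d₂, w', hw'odd, hw'eq⟩ := Nat.exists_eq_two_pow_mul_odd (by omega : w₂ ≠ 0)
        obtain ⟨k₄, hk₄odd, hk₄⟩ := HpowH d₂ w' hw'odd
        refine key_equiv (j := ε + d₂) (by omega) hbQ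
          (Int.odd_mul.mpr ⟨Int.odd_mul.mpr ⟨hx₁oddZ, hHodd⟩, hk₄odd⟩)
          (by simpa using hw'odd : Odd ((w':ℤ))) ?_ ?_
        · rw [show H^w₂ = H^(2^d₂ * w') by rw [hw'eq], hk₄]; ring
        · push_cast [hw'eq]; ring
    have hC2iff : (2:ℤ)^α₂ ∣ 2^(ε+β₂-1) * (x₂:ℤ) →
        (((2:ℤ)^α₂ ∣ (((r:ℤ)^y₁ - 1) * (x₂:ℤ)
          + (geomS ((r:ℤ)^y₁) r - (r:ℤ)^y₂) * (x₁:ℤ)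
          + (((r-1) * y₁ / m : ℕ) : ℤ) * (t:ℤ)))
        ↔ ((2:ℤ)^α₂ ∣ 2 * ((t * y₁ / m : ℕ) : ℤ) - 2^ε * ((y₁:ℤ) - (y₂:ℤ) + 1))) := by
      intro hcd
      have hpart1 : (2:ℤ)^α₂ ∣ ((r:ℤ)^y₁-1)*((x₂:ℤ) + ((r.choose 2 : ℕ):ℤ)*(x₁:ℤ))
          + 2^ε*(y₁:ℤ) := by
        rcases hS₁cases with ⟨h0, hS0⟩ | ⟨d₁, y₁', k₃, hy₁'odd, hy₁eq, hd₁β, hk₃odd, hk₃, hle⟩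
        · rw [hS0, h0]; simp
        · have he : ((r:ℤ)^y₁-1)*((x₂:ℤ) + ((r.choose 2 : ℕ):ℤ)*(x₁:ℤ)) + 2^ε*(y₁:ℤ)
              = 2^(ε+d₁) * (k₃*((x₂:ℤ) + ((r.choose 2 : ℕ):ℤ)*(x₁:ℤ)) + (y₁':ℤ)) := by
            rw [hk₃]
            push_cast [hy₁eq]
            ring
          rw [he]
          rcases (show ε+β₂ = α₂ ∨ α₂+1 ≤ ε+β₂ by omega) with hc | hc
          · have hx₂e : (2:ℤ) ∣ (x₂:ℤ) := by
              have h1 := hcd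
              rw [show ε+β₂-1 = α₂-1 by omega] at h1
              rw [show (2:ℤ)^α₂ = 2^(α₂-1)*2 by rw [← pow_succ]; congr 1; omega] at h1
              exact (mul_dvd_mul_iff_left (a := (2:ℤ)^(α₂-1)) (by positivity)).mp h1
            obtain ⟨c₀, hc₀⟩ := hx₂e
            obtain ⟨a, ha⟩ := Int.odd_mul.mpr
              ⟨(by simpa using hNodd : Odd (((r.choose 2 : ℕ):ℤ))), hx₁oddZ⟩
            obtain ⟨e₀, he₀⟩ := Int.odd_mul.mpr
              ⟨hk₃odd, (⟨c₀+a, by omega⟩ : Odd ((x₂:ℤ) + ((r.choose 2 : ℕ):ℤ)*(x₁:ℤ)))⟩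
            obtain ⟨f₀, hf₀⟩ := (by simpa using hy₁'odd : Odd ((y₁':ℤ)))
            rw [show k₃*((x₂:ℤ) + ((r.choose 2 : ℕ):ℤ)*(x₁:ℤ)) + (y₁':ℤ) = 2*(e₀+f₀+1) by omega]
            rw [show (2:ℤ)^(ε+d₁)*(2*(e₀+f₀+1)) = 2^(ε+d₁+1)*(e₀+f₀+1) by rw [pow_succ]; ring]
            exact Dvd.dvd.mul_right (pow_dvd_pow 2 (by omega)) _
          · exact Dvd.dvd.mul_right (pow_dvd_pow 2 (by omega)) _
      rw [dvd_iff_of_sub hC2z]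
      have hPQ : (2:ℤ)^α₂ ∣ (((x₁:ℤ)*H*(H^w₂-1)) + (((r:ℤ)^y₁-1)*((x₂:ℤ)
            + ((r.choose 2 : ℕ):ℤ)*(x₁:ℤ)) + (((r-1) * y₁ / m : ℕ) : ℤ) * (t:ℤ)))
          - ((x₁:ℤ)*H*(H^w₂-1) + (2 * ((t * y₁ / m : ℕ) : ℤ) - 2^ε*(y₁:ℤ))) := by
        have he : (((x₁:ℤ)*H*(H^w₂-1)) + (((r:ℤ)^y₁-1)*((x₂:ℤ)
              + ((r.choose 2 : ℕ):ℤ)*(x₁:ℤ)) + (((r-1) * y₁ / m : ℕ) : ℤ) * (t:ℤ)))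
            - ((x₁:ℤ)*H*(H^w₂-1) + (2 * ((t * y₁ / m : ℕ) : ℤ) - 2^ε*(y₁:ℤ)))
            = (((r:ℤ)^y₁-1)*((x₂:ℤ) + ((r.choose 2 : ℕ):ℤ)*(x₁:ℤ)) + 2^ε*(y₁:ℤ))
              + ((((r-1) * y₁ / m : ℕ) : ℤ) * (t:ℤ) - 2 * ((t * y₁ / m : ℕ) : ℤ)) := by
          ring
        rw [he]
        exact dvd_add hpart1 hpart2
      rw [dvd_iff_of_sub hPQ, hKEY]
      have he2 : (2:ℤ)^ε*(w₂:ℤ) + (2 * ((t * y₁ / m : ℕ) : ℤ) - 2^ε*(y₁:ℤ))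
          = 2 * ((t * y₁ / m : ℕ) : ℤ) - 2^ε * ((y₁:ℤ) - (y₂:ℤ) + 1) := by
        have hwz : (w₂:ℤ) = (y₂:ℤ) - 1 := by
          have : ((w₂+1 : ℕ):ℤ) = (y₂:ℤ) := by rw [← hwy₂]
          push_cast at this
          linarith
        rw [hwz]; ring
      rw [he2]
    -- assemble
    rw [hcond2iff]
    constructor
    · rintro ⟨h1, h2⟩
      have hcd := hC1iff.mp h1
      exact ⟨(even_iff_two_dvd).mp hy₁e, hcd, (hC2iff hcd).mp h2⟩
    · rintro ⟨-, h2, h3⟩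
      exact ⟨hC1iff.mpr h2, (hC2iff h2).mpr h3⟩
  · -- CASE B : y₁ odd
    refine iff_of_false ?_ ?_
    case refine_2 =>
      rintro ⟨hdy, -, -⟩
      obtain ⟨c, hc⟩ := hdy
      obtain ⟨a, ha⟩ := hy₁o
      omega
    rintro ⟨-, h2⟩
    have h4 : (4:ℤ) ∣ ((r:ℤ)^y₁ - 1) * x₂ + (geomS ((r:ℤ)^y₁) r - (r:ℤ)^y₂) * x₁
        + (((r-1) * y₁ / m : ℕ) : ℤ) * (t:ℤ) :=
      dvd_trans (by exact_mod_cast pow_dvd_pow (2:ℤ) hα2' : (2:ℤ)^2 ∣ 2^α₂) h2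
    have e1 : (r:ℤ) ≡ -1 [ZMOD 4] :=
      Int.modEq_iff_dvd.mpr ⟨-((w:ℤ)+1), by push_cast [hr43]; ring⟩
    have hroddN : Odd r := ⟨2*w+1, by omega⟩
    have e2 : (r:ℤ)^y₁ ≡ -1 [ZMOD 4] := by
      have := e1.pow y₁; rwa [hy₁o.neg_one_pow] at this
    have e3 : geomS ((r:ℤ)^y₁) r ≡ 1 [ZMOD 4] := by
      have := geomS_modeq e2 r
      rwa [geomS_neg_one hroddN] at this
    have e4 : (r:ℤ)^y₂ ≡ (-1)^y₂ [ZMOD 4] := e1.pow y₂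
    have e5 : (((r-1) * y₁ / m : ℕ) : ℤ) * (t:ℤ) ≡ 0 [ZMOD 4] := by
      rw [Int.modEq_zero_iff_dvd]
      exact Dvd.dvd.mul_left (by exact_mod_cast Int.natCast_dvd_natCast.mpr ht4) _
    have hC2' : ((r:ℤ)^y₁ - 1) * x₂ + (geomS ((r:ℤ)^y₁) r - (r:ℤ)^y₂) * x₁
        + (((r-1) * y₁ / m : ℕ) : ℤ) * (t:ℤ)
        ≡ (-1 - 1) * x₂ + (1 - (-1)^y₂) * x₁ + 0 [ZMOD 4] :=
      (((e2.sub_right 1).mul_right _).add ((e3.sub e4).mul_right _)).add e5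
    have h0 : (4:ℤ) ∣ (-1 - 1) * (x₂:ℤ) + (1 - (-1)^y₂) * (x₁:ℤ) + 0 :=
      Int.modEq_zero_iff_dvd.mp
        (hC2'.symm.trans (Int.modEq_zero_iff_dvd.mpr h4))
    rcases Nat.even_or_odd y₂ with hy₂e | hy₂o
    · rw [hy₂e.neg_one_pow] at h0
      obtain ⟨c, hc⟩ := h0
      have hx₂2 : (2:ℤ) ∣ (x₂:ℤ) := ⟨-c, by linarith⟩
      obtain ⟨b, hb⟩ := hy₂e
      exact hodd (dvd_sub ⟨(x₁:ℤ)*b, by push_cast [hb]; ring⟩ (hx₂2.mul_right _))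
    · rw [hy₂o.neg_one_pow] at h0
      obtain ⟨c, hc⟩ := h0
      have hx : (x₁:ℤ) - x₂ = 2*c := by linarith
      obtain ⟨a, ha⟩ := hy₁o
      obtain ⟨b, hb⟩ := hy₂o
      refine hodd ⟨(x₁:ℤ)*b - x₂*a + c, ?_⟩
      push_cast [ha, hb]
      linear_combination hx
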